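/- Let α > 1 be a real algebraic number and let ξ > 0 be a real number. If the set of limit points of the sequence of fractional parts {ξα^n}, n = 1, 2, 3, …, is finite, then α is a PV-number and ξ belongs to ℚ(α). -/

import Mathlib

set_option maxHeartbeats 1000000
set_option synthInstance.maxHeartbeats 400000

open Polynomial Filter

/-- A Pisot–Vijayaraghavan (PV) number: a real algebraic integer `α > 1` all of whose
conjugates other than `α` itself have absolute value strictly less than `1`. -/
def IsPVNumber (α : ℝ) : Prop :=
  1 < α ∧ IsIntegral ℤ α ∧
    ∀ z : ℂ, aeval z (minpoly ℚ α) = 0 → z ≠ (α : ℂ) → ‖z‖ < 1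

/-- A sequence taking values in a finite set and tending to 0 is eventually 0. -/
lemma finseq_eventually_zero (s : ℕ → ℝ) (V : Finset ℝ) (hV : ∀ n, s n ∈ V)
    (h0 : Tendsto s atTop (nhds 0)) : ∃ N, ∀ n ≥ N, s n = 0 := by
  by_cases hz : ∀ x ∈ V, x = 0
  · exact ⟨0, fun n _ => hz _ (hV n)⟩
  push_neg at hz
  set W : Finset ℝ := (V.filter (· ≠ 0)).image (|·|) with hW
  have hWne : W.Nonempty := by
    obtain ⟨x, hx, hx0⟩ := hz
    exact ⟨|x|, Finset.mem_image.2 ⟨x, Finset.mem_filter.2 ⟨hx, hx0⟩, rfl⟩⟩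
  set ε := W.min' hWne with hε
  have hεpos : 0 < ε := by
    obtain ⟨x, hx, hxe⟩ := Finset.mem_image.1 (W.min'_mem hWne)
    rw [hε, ← hxe]
    exact abs_pos.2 (Finset.mem_filter.1 hx).2
  have := (Metric.tendsto_atTop.1 h0) ε hεpos
  obtain ⟨N, hN⟩ := this
  refine ⟨N, fun n hn => ?_⟩
  by_contra hne
  have h1 : |s n| ∈ W := Finset.mem_image.2 ⟨s n, Finset.mem_filter.2 ⟨hV n, hne⟩, rfl⟩
  have h2 := W.min'_le _ h1
  have h3 := hN n hn
  rw [Real.dist_eq, sub_zero] at h3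
  linarith

/-- Annihilation: if a finite exponential sum tends to 0, the coefficients of
exponents of modulus `≥ 1` vanish. -/
lemma coeff_vanish_of_tendsto_zero {ι : Type*} [Fintype ι] [DecidableEq ι] (lam : ι → ℂ)
    (hinj : Function.Injective lam) (γ : ι → ℂ)
    (h : Tendsto (fun n : ℕ => ∑ i, γ i * lam i ^ n) atTop (nhds 0)) :
    ∀ i, 1 ≤ ‖lam i‖ → γ i = 0 := by
  intro i0 hi0
  set f : ℕ → ℂ := fun n => ∑ i, γ i * lam i ^ n with hf
  set Q : ℂ[X] := ∏ i ∈ Finset.univ.erase i0, (X - C (lam i)) with hQ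
  set t : ℕ → ℂ := fun n => ∑ j ∈ Finset.range (Q.natDegree + 1), Q.coeff j * f (n + j) with ht
  have hQeval : ∀ i, i ≠ i0 → Q.eval (lam i) = 0 := by
    intro i hi
    rw [hQ, eval_prod]
    apply Finset.prod_eq_zero (Finset.mem_erase.2 ⟨hi, Finset.mem_univ i⟩)
    simp
  have hQi0 : Q.eval (lam i0) ≠ 0 := by
    rw [hQ, eval_prod]
    apply Finset.prod_ne_zero_iff.2
    intro i hi
    simp only [eval_sub, eval_X, eval_C, sub_ne_zero]
    exact fun hc => (Finset.mem_erase.1 hi).1 (hinj hc.symm)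
  have hteq : ∀ n, t n = γ i0 * Q.eval (lam i0) * lam i0 ^ n := by
    intro n
    have h1 : t n = ∑ i, ∑ j ∈ Finset.range (Q.natDegree + 1),
        Q.coeff j * (γ i * lam i ^ (n + j)) := by
      rw [ht]
      simp only [hf, Finset.mul_sum]
      rw [Finset.sum_comm]
    have h2 : ∀ i, ∑ j ∈ Finset.range (Q.natDegree + 1), Q.coeff j * (γ i * lam i ^ (n + j))
        = γ i * lam i ^ n * Q.eval (lam i) := by
      intro i
      rw [eval_eq_sum_range, Finset.mul_sum]
      apply Finset.sum_congr rfl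
      intro j _
      rw [pow_add]
      ring
    calc t n = ∑ i, ∑ j ∈ Finset.range (Q.natDegree + 1),
          Q.coeff j * (γ i * lam i ^ (n + j)) := h1
      _ = ∑ i, γ i * lam i ^ n * Q.eval (lam i) := Finset.sum_congr rfl fun i _ => h2 i
      _ = γ i0 * lam i0 ^ n * Q.eval (lam i0) := by
          rw [Finset.sum_eq_single i0]
          · intro i _ hi; rw [hQeval i hi, mul_zero]
          · intro h; exact absurd (Finset.mem_univ i0) h
      _ = γ i0 * Q.eval (lam i0) * lam i0 ^ n := by ring
  have hht : Tendsto t atTop (nhds 0) := by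
    have : Tendsto (fun n => ∑ j ∈ Finset.range (Q.natDegree + 1), Q.coeff j * f (n + j))
        atTop (nhds (∑ j ∈ Finset.range (Q.natDegree + 1), Q.coeff j * 0)) := by
      apply tendsto_finset_sum
      intro j _
      exact (h.comp (tendsto_add_atTop_nat j)).const_mul _
    simpa using this
  by_contra hγ
  have hc : γ i0 * Q.eval (lam i0) ≠ 0 := mul_ne_zero hγ hQi0
  have hlow : ∀ n, ‖γ i0 * Q.eval (lam i0)‖ ≤ ‖t n‖ := by
    intro n
    have habs : ‖t n‖
        = ‖γ i0 * Q.eval (lam i0)‖ * ‖lam i0‖ ^ n := by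
      rw [hteq n, norm_mul, norm_pow]
    rw [habs]
    have h1n : (1 : ℝ) ≤ ‖lam i0‖ ^ n := one_le_pow₀ hi0
    exact le_mul_of_one_le_right (by positivity) h1n
  have := (Metric.tendsto_atTop.1 hht) (‖γ i0 * Q.eval (lam i0)‖)
    (norm_pos_iff.2 hc)
  obtain ⟨N, hN⟩ := this
  have h1 := hN N le_rfl
  rw [dist_eq_norm, sub_zero] at h1
  have h2 := hlow N
  linarith

/-- Two sequences satisfying the same order-`d` monic linear recurrence and agreeing on a
window of length `d` agree from then on. -/
lemma rec_eq_of_window (d : ℕ) (hd : 0 < d) (Pc : ℕ → ℝ) (hmon : Pc d = 1) (f g : ℕ → ℝ)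
    (n₁ : ℕ)
    (hf : ∀ n ≥ n₁, ∑ j ∈ Finset.range (d + 1), Pc j * f (n + j) = 0)
    (hg : ∀ n ≥ n₁, ∑ j ∈ Finset.range (d + 1), Pc j * g (n + j) = 0)
    (hbase : ∀ j < d, f (n₁ + j) = g (n₁ + j)) : ∀ n ≥ n₁, f n = g n := by
  have key : ∀ k, f (n₁ + k) = g (n₁ + k) := by
    intro k
    induction k using Nat.strong_induction_on with
    | _ k ih =>
      rcases lt_or_ge k d with hk | hk
      · exact hbase k hk
      · set n := n₁ + (k - d) with hn
        have hkd : k - d + d = k := Nat.sub_add_cancel hk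
        have hfn := hf n (Nat.le_add_right _ _)
        have hgn := hg n (Nat.le_add_right _ _)
        rw [Finset.sum_range_succ] at hfn hgn
        have hsum : ∑ j ∈ Finset.range d, Pc j * f (n + j)
            = ∑ j ∈ Finset.range d, Pc j * g (n + j) := by
          apply Finset.sum_congr rfl
          intro j hj
          have hj' := Finset.mem_range.1 hj
          have : k - d + j < k := by omega
          rw [hn, add_assoc, ih _ this]
        have hnd : n + d = n₁ + k := by omega
        rw [hmon, one_mul, hnd] at hfn hgn
        have := hsum ▸ hfn
        linarith [hgn, this]
  intro n hn
  have : n = n₁ + (n - n₁) := by omega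
  rw [this]; exact key _

/-- A cluster point obtained from a subsequence. -/
lemma mapClusterPt_of_subseq {f : ℕ → ℝ} {φ : ℕ → ℕ} {a : ℝ} (hφ : StrictMono φ)
    (h : Tendsto (f ∘ φ) atTop (nhds a)) : MapClusterPt a atTop f := by
  rw [mapClusterPt_iff_frequently]
  intro s hs
  have he : ∀ᶠ k in atTop, f (φ k) ∈ s := h.eventually hs
  rw [frequently_atTop]
  intro N
  rw [eventually_atTop] at he
  obtain ⟨K, hK⟩ := he
  exact ⟨φ (max N K), le_trans (le_max_left N K) (le_trans (hφ.le_apply) le_rfl),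
    hK _ (le_max_right N K)⟩

/-- If `α > 1` is a real algebraic number, `ξ > 0` is real, and the set of limit points of the
sequence of fractional parts `{ξ αⁿ}` is finite, then `α` is a PV-number and `ξ ∈ ℚ(α)`. -/
theorem pisot_of_finite_limit_points (α ξ : ℝ) (hα : 1 < α) (halg : IsAlgebraic ℚ α)
    (hξ : 0 < ξ)
    (hfin : {x : ℝ | MapClusterPt x atTop (fun n : ℕ => Int.fract (ξ * α ^ n))}.Finite) :
    IsPVNumber α ∧ ξ ∈ IntermediateField.adjoin ℚ ({α} : Set ℝ) := by
  classical
  have hαpos : (0:ℝ) < α := lt_trans one_pos hα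
  have hα0 : α ≠ 0 := ne_of_gt hαpos
  set u : ℕ → ℝ := fun n => ξ * α ^ n with hu_def
  set fr : ℕ → ℝ := fun n => Int.fract (u n) with hfr_def
  set L := {x : ℝ | MapClusterPt x atTop fr} with hL_def
  have hLfin : L.Finite := hfin
  have hfr01 : ∀ n, fr n ∈ Set.Icc (0:ℝ) 1 :=
    fun n => ⟨Int.fract_nonneg _, le_of_lt (Int.fract_lt_one _)⟩
  have hLne : L.Nonempty := by
    obtain ⟨x, -, φ, hφ, hconv⟩ :=
      tendsto_subseq_of_bounded (Metric.isBounded_Icc (0:ℝ) 1) hfr01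
    exact ⟨x, mapClusterPt_of_subseq hφ hconv⟩
  have hchoice : ∀ n : ℕ, ∃ cc ∈ L, ∀ x ∈ L, |fr n - cc| ≤ |fr n - x| := by
    intro n
    obtain ⟨cc, hcc, hmin⟩ := hLfin.toFinset.exists_min_image (fun x => |fr n - x|)
      (by rwa [← Set.Finite.toFinset_nonempty hLfin] at hLne)
    exact ⟨cc, hLfin.mem_toFinset.1 hcc, fun x hx => hmin x (hLfin.mem_toFinset.2 hx)⟩
  choose c hcL hcmin using hchoice
  set e : ℕ → ℝ := fun n => fr n - c n with he_def
  have he0 : Tendsto e atTop (nhds 0) := by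
    rw [Metric.tendsto_atTop]
    by_contra hcon
    push_neg at hcon
    obtain ⟨ε, hε, hfreq⟩ := hcon
    have hfr : ∃ᶠ n in atTop, ε ≤ |e n| := by
      rw [frequently_atTop]
      intro N
      obtain ⟨n, hn, hdist⟩ := hfreq N
      rw [Real.dist_eq, sub_zero] at hdist
      exact ⟨n, hn, hdist⟩
    obtain ⟨φ, hφ, hφε⟩ := extraction_of_frequently_atTop hfr
    obtain ⟨x, -, ψ, hψ, hconv⟩ := tendsto_subseq_of_bounded (Metric.isBounded_Icc (0:ℝ) 1)
      (fun k => hfr01 (φ k))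
    have hxL : x ∈ L := mapClusterPt_of_subseq (hφ.comp hψ) hconv
    have hlow : ∀ k, ε ≤ |fr (φ (ψ k)) - x| :=
      fun k => le_trans (hφε (ψ k)) (hcmin _ x hxL)
    have htend : Tendsto (fun k => |fr (φ (ψ k)) - x|) atTop (nhds 0) := by
      have h2 : Tendsto (fun k => fr (φ (ψ k)) - x) atTop (nhds (x - x)) :=
        hconv.sub tendsto_const_nhds
      rw [sub_self] at h2
      simpa using h2.abs
    have := ge_of_tendsto htend (Eventually.of_forall hlow)
    linarith
  set a : ℕ → ℤ := fun n => ⌊u n⌋ with ha_def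
  have hu_split : ∀ n, u n = (a n : ℝ) + c n + e n := by
    intro n
    have h2 : (⌊u n⌋ : ℝ) + fr n = u n := Int.floor_add_fract (u n)
    simp only [he_def, ha_def]
    linarith
  set P := minpoly ℚ α with hP_def
  set d := P.natDegree with hd_def
  have hint : IsIntegral ℚ α := halg.isIntegral
  have hd1 : 1 ≤ d := minpoly.natDegree_pos hint
  have hPa : ∑ j ∈ Finset.range (d+1), (P.coeff j : ℝ) * α ^ j = 0 := by
    have h0 : aeval α (minpoly ℚ α) = 0 := minpoly.aeval ℚ α
    rw [aeval_eq_sum_range] at h0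
    rw [← hP_def] at h0
    rw [← hd_def] at h0
    simpa [Rat.smul_def] using h0
  have huP : ∀ n, ∑ j ∈ Finset.range (d+1), (P.coeff j : ℝ) * u (n+j) = 0 := by
    intro n
    have hstep : ∀ j, u (n + j) = u n * α ^ j := by
      intro j
      simp only [hu_def]
      rw [pow_add]
      ring
    calc ∑ j ∈ Finset.range (d+1), (P.coeff j : ℝ) * u (n+j)
        = u n * ∑ j ∈ Finset.range (d+1), (P.coeff j : ℝ) * α ^ j := by
          rw [Finset.mul_sum]
          apply Finset.sum_congr rfl
          intro j _
          rw [hstep j]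
          ring
      _ = 0 := by rw [hPa, mul_zero]
  have hqex : ∃ q : ℕ → ℤ, ∃ m : ℕ, 0 < m ∧ ∀ j, (q j : ℚ) = (m : ℚ) * P.coeff j := by
    refine ⟨fun j => (((∏ i ∈ Finset.range (d+1), (P.coeff i).den) / (P.coeff j).den : ℕ) : ℤ)
      * (P.coeff j).num, ∏ i ∈ Finset.range (d+1), (P.coeff i).den,
      Finset.prod_pos fun i _ => (P.coeff i).pos, ?_⟩
    intro j
    rcases lt_or_ge j (d+1) with hj | hj
    · have hdvd : (P.coeff j).den ∣ ∏ i ∈ Finset.range (d+1), (P.coeff i).den :=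
        Finset.dvd_prod_of_mem _ (Finset.mem_range.2 hj)
      have hc : (((∏ i ∈ Finset.range (d+1), (P.coeff i).den) / (P.coeff j).den : ℕ) : ℚ)
          * ((P.coeff j).den : ℚ) = ((∏ i ∈ Finset.range (d+1), (P.coeff i).den : ℕ) : ℚ) := by
        rw [← Nat.cast_mul, Nat.div_mul_cancel hdvd]
      rw [Int.cast_mul, Int.cast_natCast]
      rw [← hc, mul_assoc]
      congr 1
      rw [mul_comm]
      exact (Rat.mul_den_eq_num _).symm
    · have hz : P.coeff j = 0 := coeff_eq_zero_of_natDegree_lt (by omega)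
      simp [hz]
  obtain ⟨q, m, hm, hq⟩ := hqex
  have hqR : ∀ j, (q j : ℝ) = (m : ℝ) * (P.coeff j : ℝ) := by
    intro j
    have := hq j
    have h2 : ((q j : ℚ) : ℝ) = (((m : ℚ) * P.coeff j : ℚ) : ℝ) := by rw [this]
    push_cast at h2 ⊢
    exact h2
  set E : ℕ → ℝ := fun n => ∑ j ∈ Finset.range (d+1), (q j : ℝ) * e (n+j) with hE_def
  have hE0 : Tendsto E atTop (nhds 0) := by
    have hsum : Tendsto (fun n => ∑ j ∈ Finset.range (d+1), (q j : ℝ) * e (n+j)) atTop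
        (nhds (∑ j ∈ Finset.range (d+1), (q j : ℝ) * 0)) := by
      apply tendsto_finset_sum
      intro j _
      exact (he0.comp (tendsto_add_atTop_nat j)).const_mul _
    simpa using hsum
  have hEfin : ∃ V : Finset ℝ, ∀ n, E n ∈ V := by
    obtain ⟨B, hB0, hBL⟩ : ∃ B, 0 ≤ B ∧ ∀ x ∈ L, |x| ≤ B := by
      set FF := hLfin.toFinset.image (|·|) with hFF
      have hFne : FF.Nonempty :=
        ⟨|hLne.choose|, Finset.mem_image.2 ⟨_, hLfin.mem_toFinset.2 hLne.choose_spec, rfl⟩⟩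
      refine ⟨FF.max' hFne, ?_, ?_⟩
      · obtain ⟨x, hx, hxe⟩ := Finset.mem_image.1 (FF.max'_mem hFne)
        rw [← hxe]
        exact abs_nonneg x
      · intro x hx
        exact FF.le_max' _ (Finset.mem_image.2 ⟨x, hLfin.mem_toFinset.2 hx, rfl⟩)
    set Qs : ℝ := ∑ j ∈ Finset.range (d+1), |(q j : ℝ)| with hQs
    have hQs0 : 0 ≤ Qs := Finset.sum_nonneg fun j _ => abs_nonneg _
    have heb : ∀ n, |e n| ≤ 1 + B := by
      intro n
      have h1 : |fr n| ≤ 1 := by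
        have h2 := hfr01 n
        rw [abs_le]
        exact ⟨by linarith [h2.1], h2.2⟩
      have h2 : |c n| ≤ B := hBL _ (hcL n)
      have h3 : |e n| ≤ |fr n| + |c n| := by
        have := abs_add_le (fr n) (-(c n))
        simpa [sub_eq_add_neg, he_def] using this
      linarith
    set T : ℕ → ℝ := fun n => ∑ j ∈ Finset.range (d+1), (q j : ℝ) * c (n+j) with hT
    have hpifin : (Set.univ.pi (fun _ : Fin (d+1) => L)).Finite :=
      Set.Finite.pi (fun _ => hLfin)
    set TS : Finset ℝ := hpifin.toFinset.image
      (fun x : Fin (d+1) → ℝ => ∑ j : Fin (d+1), (q (j:ℕ) : ℝ) * x j) with hTS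
    have hTmem : ∀ n, T n ∈ TS := by
      intro n
      apply Finset.mem_image.2
      refine ⟨fun j : Fin (d+1) => c (n + (j:ℕ)), hpifin.mem_toFinset.2 ?_, ?_⟩
      · intro j _
        exact hcL _
      · rw [hT]
        exact (Fin.sum_univ_eq_sum_range (fun j => (q j : ℝ) * c (n + j)) (d+1))
    set A : ℕ → ℤ := fun n => ∑ j ∈ Finset.range (d+1), q j * a (n+j) with hA
    have hATE : ∀ n, (A n : ℝ) + T n + E n = 0 := by
      intro n
      have h1 : ∑ j ∈ Finset.range (d+1), (q j:ℝ) * u (n+j) = 0 := by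
        calc ∑ j ∈ Finset.range (d+1), (q j:ℝ) * u (n+j)
            = (m:ℝ) * ∑ j ∈ Finset.range (d+1), (P.coeff j:ℝ) * u (n+j) := by
              rw [Finset.mul_sum]
              apply Finset.sum_congr rfl
              intro j _
              rw [hqR j]
              ring
          _ = 0 := by rw [huP n, mul_zero]
      have h3 : (A n : ℝ) = ∑ j ∈ Finset.range (d+1), (q j:ℝ) * (a (n+j):ℝ) := by
        rw [hA]
        push_cast
        rfl
      rw [h3, hT, hE_def, ← Finset.sum_add_distrib, ← Finset.sum_add_distrib, ← h1]
      apply Finset.sum_congr rfl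
      intro j _
      rw [hu_split (n+j)]
      ring
    have hTb : ∀ n, |T n| ≤ Qs * B := by
      intro n
      rw [hT]
      refine (Finset.abs_sum_le_sum_abs _ _).trans ?_
      rw [hQs, Finset.sum_mul]
      apply Finset.sum_le_sum
      intro j _
      rw [abs_mul]
      exact mul_le_mul_of_nonneg_left (hBL _ (hcL _)) (abs_nonneg _)
    have hEb : ∀ n, |E n| ≤ Qs * (1+B) := by
      intro n
      rw [hE_def]
      refine (Finset.abs_sum_le_sum_abs _ _).trans ?_
      rw [hQs, Finset.sum_mul]
      apply Finset.sum_le_sum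
      intro j _
      rw [abs_mul]
      exact mul_le_mul_of_nonneg_left (heb _) (abs_nonneg _)
    set C : ℝ := Qs*B + Qs*(1+B) with hC
    have hA_b : ∀ n, A n ∈ Finset.Icc (-⌈C⌉) ⌈C⌉ := by
      intro n
      have h4 := hATE n
      have h2 := hTb n
      have h3 := hEb n
      rw [abs_le] at h2 h3
      have h1 : |(A n : ℝ)| ≤ C := by
        rw [abs_le, hC]
        constructor <;> nlinarith [h2.1, h2.2, h3.1, h3.2]
      rw [abs_le] at h1
      have hceil := Int.le_ceil C
      rw [Finset.mem_Icc]
      constructor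
      · have : ((-⌈C⌉ : ℤ) : ℝ) ≤ ((A n : ℤ) : ℝ) := by
          push_cast
          linarith [h1.1]
        exact_mod_cast this
      · have : ((A n : ℤ) : ℝ) ≤ ((⌈C⌉ : ℤ) : ℝ) := by
          push_cast
          linarith [h1.2]
        exact_mod_cast this
    refine ⟨Finset.image₂ (fun (z : ℤ) (tt : ℝ) => -(z:ℝ) - tt)
      (Finset.Icc (-⌈C⌉) ⌈C⌉) TS, ?_⟩
    intro n
    apply Finset.mem_image₂.2
    refine ⟨A n, hA_b n, T n, hTmem n, ?_⟩
    have := hATE n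
    linarith
  obtain ⟨V, hV⟩ := hEfin
  obtain ⟨N₀, hN₀⟩ := finseq_eventually_zero E V hV hE0
  set y : ℕ → ℝ := fun n => u n - e n with hy_def
  have hyrec : ∀ n ≥ N₀, ∑ j ∈ Finset.range (d+1), (P.coeff j : ℝ) * y (n+j) = 0 := by
    intro n hn
    have hm0 : (m:ℝ) ≠ 0 := Nat.cast_ne_zero.2 hm.ne'
    have hEn := hN₀ n hn
    have h2 : E n = (m:ℝ) * ∑ j ∈ Finset.range (d+1), (P.coeff j:ℝ) * e (n+j) := by
      rw [hE_def, Finset.mul_sum]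
      apply Finset.sum_congr rfl
      intro j _
      rw [hqR]
      ring
    rw [h2] at hEn
    have h1 : ∑ j ∈ Finset.range (d+1), (P.coeff j:ℝ) * e (n+j) = 0 :=
      (mul_eq_zero.1 hEn).resolve_left hm0
    calc ∑ j ∈ Finset.range (d+1), (P.coeff j : ℝ) * y (n+j)
        = ∑ j ∈ Finset.range (d+1), ((P.coeff j : ℝ) * u (n+j) - (P.coeff j : ℝ) * e (n+j)) := by
          apply Finset.sum_congr rfl
          intro j _
          simp only [hy_def]
          ring
      _ = ∑ j ∈ Finset.range (d+1), (P.coeff j : ℝ) * u (n+j)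
            - ∑ j ∈ Finset.range (d+1), (P.coeff j : ℝ) * e (n+j) := Finset.sum_sub_distrib _ _
      _ = 0 := by rw [huP n, h1, sub_zero]
  have hyac : ∀ n, y n = (a n : ℝ) + c n := by
    intro n
    simp only [hy_def]
    have := hu_split n
    linarith
  have hwin : ∃ n₁ ≥ N₀, ∃ h ≥ 1, ∀ j < d, c (n₁ + h + j) = c (n₁ + j) := by
    have hinf : (Set.Ici N₀).Infinite := Set.Ici_infinite N₀
    have hmap : Set.MapsTo (fun n => fun j : Fin d => c (n + (j:ℕ))) (Set.Ici N₀)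
        (Set.univ.pi fun _ : Fin d => L) := by
      intro n _
      intro j _
      exact hcL _
    obtain ⟨x, hx, y', hy', hne, heq⟩ := hinf.exists_ne_map_eq_of_mapsTo hmap
      (Set.Finite.pi fun _ => hLfin)
    rcases lt_or_gt_of_ne hne with hlt | hlt
    · refine ⟨x, hx, y' - x, by omega, ?_⟩
      intro j hj
      have hje := congrFun heq ⟨j, hj⟩
      have hxy : x + (y' - x) = y' := by omega
      rw [hxy]
      exact (hje).symm
    · refine ⟨y', hy', x - y', by omega, ?_⟩
      intro j hj
      have hje := congrFun heq ⟨j, hj⟩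
      have hxy : y' + (x - y') = x := by omega
      rw [hxy]
      exact hje
  obtain ⟨n₁, hn₁, h, hh1, hcwin⟩ := hwin
  set Y : ℕ → ℝ := fun n => y (n + h) - y n with hY_def
  have hYrec : ∀ n ≥ n₁, ∑ j ∈ Finset.range (d+1), (P.coeff j : ℝ) * Y (n+j) = 0 := by
    intro n hn
    have h1 := hyrec (n+h) (by omega)
    have h2 := hyrec n (by omega)
    calc ∑ j ∈ Finset.range (d+1), (P.coeff j : ℝ) * Y (n+j)
        = ∑ j ∈ Finset.range (d+1), ((P.coeff j : ℝ) * y (n+h+j) - (P.coeff j : ℝ) * y (n+j)) := by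
          apply Finset.sum_congr rfl
          intro j _
          have hidx : n + j + h = n + h + j := by omega
          simp only [hY_def]
          rw [hidx]
          ring
      _ = ∑ j ∈ Finset.range (d+1), (P.coeff j : ℝ) * y (n+h+j)
            - ∑ j ∈ Finset.range (d+1), (P.coeff j : ℝ) * y (n+j) := Finset.sum_sub_distrib _ _
      _ = 0 := by rw [h1, h2, sub_zero]
  have hYwin : ∀ j < d, Y (n₁ + j) = ((a (n₁ + h + j) - a (n₁ + j) : ℤ) : ℝ) := by
    intro j hj
    have h1 : Y (n₁ + j) = y (n₁ + j + h) - y (n₁ + j) := rfl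
    have hidx : n₁ + j + h = n₁ + h + j := by omega
    rw [h1, hidx, hyac, hyac, hcwin j hj]
    push_cast
    ring
  -- the number field ℚ(α)
  haveI hFD : FiniteDimensional ℚ (IntermediateField.adjoin ℚ ({α} : Set ℝ)) :=
    IntermediateField.adjoin.finiteDimensional hint
  set g : (IntermediateField.adjoin ℚ ({α} : Set ℝ)) :=
    IntermediateField.AdjoinSimple.gen ℚ α with hg_def
  have hgcoe : (g : ℝ) = α := rfl
  have hg0 : g ≠ 0 := by
    intro hz
    apply hα0
    rw [← hgcoe, hz]
    simp
  have haevalg : aeval g P = 0 := by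
    have hinjv : Function.Injective (IntermediateField.adjoin ℚ ({α} : Set ℝ)).val :=
      (IntermediateField.adjoin ℚ ({α} : Set ℝ)).val.toRingHom.injective
    apply hinjv
    rw [map_zero, ← aeval_algHom_apply]
    rw [hP_def]
    exact minpoly.aeval ℚ α
  have hθex : ∃ θ : (IntermediateField.adjoin ℚ ({α} : Set ℝ)),
      ∀ j < d, Algebra.trace ℚ _ (θ * g ^ (n₁ + j)) = ((a (n₁+h+j) - a (n₁+j) : ℤ) : ℚ) := by
    set Φ : (IntermediateField.adjoin ℚ ({α} : Set ℝ)) →ₗ[ℚ] (Fin d → ℚ) := LinearMap.pi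
      (fun j : Fin d => (Algebra.trace ℚ (IntermediateField.adjoin ℚ ({α} : Set ℝ))).comp
        (LinearMap.mulRight ℚ (g ^ (n₁ + (j:ℕ))))) with hΦ
    have hΦapp : ∀ (ϑ : (IntermediateField.adjoin ℚ ({α} : Set ℝ))) (j : Fin d),
        Φ ϑ j = Algebra.trace ℚ _ (ϑ * g ^ (n₁ + (j:ℕ))) := fun ϑ j => rfl
    have hrank : Module.finrank ℚ (IntermediateField.adjoin ℚ ({α} : Set ℝ)) = d :=
      IntermediateField.adjoin.finrank hint
    set pb := IntermediateField.adjoin.powerBasis hint with hpb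
    have hdim : pb.dim = d := (pb.finrank).symm.trans hrank
    have hΦinj : Function.Injective Φ := by
      apply (injective_iff_map_eq_zero Φ).2
      intro z hz
      have hz' : ∀ j : Fin d, Algebra.trace ℚ _ (z * g ^ (n₁ + (j:ℕ))) = 0 := by
        intro j
        rw [← hΦapp z j, hz]
        rfl
      have hnd := traceForm_nondegenerate ℚ (IntermediateField.adjoin ℚ ({α} : Set ℝ))
      apply hnd.1 z
      intro ψ
      rw [Algebra.traceForm_apply]
      have key : ∀ χ, Algebra.trace ℚ (IntermediateField.adjoin ℚ ({α} : Set ℝ))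
          (z * (χ * g ^ n₁)) = 0 := by
        intro χ
        conv_lhs => rw [← pb.basis.sum_repr χ]
        rw [Finset.sum_mul, Finset.mul_sum, map_sum]
        apply Finset.sum_eq_zero
        intro i _
        rw [smul_mul_assoc, mul_smul_comm, map_smul]
        have hbi : pb.basis i * g ^ n₁ = g ^ (n₁ + (i:ℕ)) := by
          rw [PowerBasis.coe_basis, IntermediateField.adjoin.powerBasis_gen]
          rw [← pow_add, add_comm]
        rw [hbi]
        have hid : (i:ℕ) < d := by
          have h2 := i.2
          omega
        have h3 := hz' ⟨(i:ℕ), hid⟩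
        rw [h3]
        simp
      have hψ : (ψ * (g ^ n₁)⁻¹) * g ^ n₁ = ψ := by
        have hgn0 : g ^ n₁ ≠ 0 := pow_ne_zero _ hg0
        field_simp
      have hk2 := key (ψ * (g ^ n₁)⁻¹)
      rwa [hψ] at hk2
    have hfr2 : Module.finrank ℚ (Fin d → ℚ) = d := by
      simp
    have hsurj : Function.Surjective Φ :=
      (LinearMap.injective_iff_surjective_of_finrank_eq_finrank
        (by rw [hrank, hfr2])).1 hΦinj
    obtain ⟨θ, hθv⟩ := hsurj
      (fun j : Fin d => ((a (n₁+h+(j:ℕ)) - a (n₁+(j:ℕ)) : ℤ) : ℚ))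
    refine ⟨θ, ?_⟩
    intro j hj
    have hcf := congrFun hθv ⟨j, hj⟩
    rw [hΦapp] at hcf
    exact hcf
  obtain ⟨θ, hθ⟩ := hθex
  set t : ℕ → ℚ := fun n => Algebra.trace ℚ _ (θ * g ^ n) with ht_def
  have htrec : ∀ n, ∑ j ∈ Finset.range (d+1), (P.coeff j : ℝ) * ((t (n+j) : ℚ) : ℝ) = 0 := by
    intro n
    have hq' : ∑ j ∈ Finset.range (d+1), P.coeff j * t (n+j) = 0 := by
      have h1 : ∀ j, P.coeff j * t (n+j)
          = Algebra.trace ℚ _ (P.coeff j • (θ * g ^ (n+j))) := by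
        intro j
        rw [map_smul, smul_eq_mul]
      rw [Finset.sum_congr rfl fun j _ => h1 j, ← map_sum]
      have h2 : ∑ j ∈ Finset.range (d+1), P.coeff j • (θ * g ^ (n+j))
          = θ * g ^ n * aeval g P := by
        rw [aeval_eq_sum_range]
        rw [show P.natDegree = d from hd_def.symm]
        rw [Finset.mul_sum]
        apply Finset.sum_congr rfl
        intro j _
        rw [pow_add, ← mul_assoc, mul_smul_comm]
      rw [h2, haevalg, mul_zero, map_zero]
    exact_mod_cast hq'
  have hYt : ∀ n ≥ n₁, Y n = ((t n : ℚ) : ℝ) := by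
    apply rec_eq_of_window d (by omega) (fun j => (P.coeff j : ℝ)) ?_ Y
      (fun n => ((t n : ℚ) : ℝ)) n₁ hYrec (fun n _ => htrec n)
    · intro j hj
      rw [hYwin j hj]
      have := hθ j hj
      simp only [ht_def]
      rw [this]
      push_cast
      ring
    · show ((P.coeff d : ℚ) : ℝ) = 1
      have hmon : P.Monic := by rw [hP_def]; exact minpoly.monic hint
      rw [hd_def, hmon.coeff_natDegree]
      norm_num
  set σ₁ : (IntermediateField.adjoin ℚ ({α} : Set ℝ)) →ₐ[ℚ] ℂ :=
    (Complex.ofRealAm.restrictScalars ℚ).comp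
      (IntermediateField.adjoin ℚ ({α} : Set ℝ)).val with hσ₁_def
  have hσ₁g : σ₁ g = (α : ℂ) := rfl
  have hσ₁θ' : σ₁ θ = ((θ : ℝ) : ℂ) := rfl
  have htraceC : ∀ n, ∑ σ : (IntermediateField.adjoin ℚ ({α} : Set ℝ)) →ₐ[ℚ] ℂ,
      σ θ * (σ g) ^ n = ((t n : ℚ) : ℂ) := by
    intro n
    have h1 := trace_eq_sum_embeddings (K := ℚ)
      (L := IntermediateField.adjoin ℚ ({α} : Set ℝ)) ℂ (x := θ * g ^ n)
    have h2 : algebraMap ℚ ℂ (t n) = ((t n : ℚ) : ℂ) := by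
      exact eq_ratCast ((algebraMap ℚ ℂ) : ℚ →+* ℂ) (t n)
    rw [ht_def]
    rw [← h2, h1]
    apply Finset.sum_congr rfl
    intro σ _
    rw [map_mul, map_pow]
  have hginj : Function.Injective
      (fun σ : (IntermediateField.adjoin ℚ ({α} : Set ℝ)) →ₐ[ℚ] ℂ => σ g) := by
    intro σ τ hστ
    apply (IntermediateField.adjoin.powerBasis hint).algHom_ext
    rw [IntermediateField.adjoin.powerBasis_gen]
    exact hστ
  have hchpos : 0 < ξ * (α ^ h - 1) := by
    have : (1:ℝ) < α ^ h := one_lt_pow₀ hα (by omega)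
    nlinarith
  set ch : ℂ := ((ξ * (α ^ h - 1) : ℝ) : ℂ) with hch_def
  have hch0 : ch ≠ 0 := by
    simp only [hch_def, ne_eq, Complex.ofReal_eq_zero]
    exact ne_of_gt hchpos
  have hvanish : ∀ σ : (IntermediateField.adjoin ℚ ({α} : Set ℝ)) →ₐ[ℚ] ℂ,
      1 ≤ ‖σ g‖ → (if σ = σ₁ then σ θ - ch else σ θ) = 0 := by
    apply coeff_vanish_of_tendsto_zero (fun σ => σ g) hginj
      (fun σ => if σ = σ₁ then σ θ - ch else σ θ)
    have hsplit : ∀ n : ℕ, ∑ σ : (IntermediateField.adjoin ℚ ({α} : Set ℝ)) →ₐ[ℚ] ℂ,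
        (if σ = σ₁ then σ θ - ch else σ θ) * (σ g) ^ n
        = ((t n : ℚ) : ℂ) - ch * ((α:ℝ) : ℂ) ^ n := by
      intro n
      have hterm : ∀ σ : (IntermediateField.adjoin ℚ ({α} : Set ℝ)) →ₐ[ℚ] ℂ,
          (if σ = σ₁ then σ θ - ch else σ θ) * (σ g) ^ n
          = σ θ * (σ g) ^ n - (if σ = σ₁ then ch * (σ g) ^ n else 0) := by
        intro σ
        by_cases hσ : σ = σ₁
        · rw [if_pos hσ, if_pos hσ]
          ring
        · rw [if_neg hσ, if_neg hσ]
          ring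
      rw [Finset.sum_congr rfl fun σ _ => hterm σ, Finset.sum_sub_distrib]
      rw [htraceC n]
      congr 1
      rw [Finset.sum_ite_eq' Finset.univ σ₁ (fun σ => ch * (σ g) ^ n)]
      rw [if_pos (Finset.mem_univ σ₁), hσ₁g]
    have hreal : Tendsto (fun n => e n - e (n + h)) atTop (nhds 0) := by
      have h2 := he0.sub (he0.comp (tendsto_add_atTop_nat h))
      simpa using h2
    have hYdiff : ∀ n ≥ n₁, ((t n : ℚ) : ℂ) - ch * ((α:ℝ):ℂ) ^ n
        = ((e n - e (n + h) : ℝ) : ℂ) := by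
      intro n hn
      have h1 : Y n = ((t n : ℚ):ℝ) := hYt n hn
      have h2 : Y n - ξ*(α^h - 1)*α^n = e n - e (n+h) := by
        have e1 : Y n = (u (n+h) - e (n+h)) - (u n - e n) := rfl
        have e2 : u (n+h) = ξ * α ^ h * α ^ n := by
          simp only [hu_def]
          rw [pow_add]
          ring
        have e3 : u n = ξ * α ^ n := rfl
        rw [e1, e2, e3]
        ring
      have h3 : ((t n : ℚ) : ℝ) - ξ*(α^h - 1)*α^n = e n - e (n+h) := by
        rw [← h1]
        exact h2
      calc ((t n : ℚ) : ℂ) - ch * ((α:ℝ):ℂ) ^ n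
          = ((((t n : ℚ):ℝ) - ξ*(α^h - 1)*α^n : ℝ) : ℂ) := by
            rw [hch_def]
            push_cast
            ring
        _ = ((e n - e (n + h) : ℝ) : ℂ) := by rw [h3]
    have htend : Tendsto (fun n => ((e n - e (n + h) : ℝ) : ℂ)) atTop (nhds 0) := by
      have h2 := (Complex.continuous_ofReal.tendsto (0:ℝ)).comp hreal
      rw [Complex.ofReal_zero] at h2
      exact h2
    apply Tendsto.congr' ?_ htend
    rw [EventuallyEq, eventually_atTop]
    exact ⟨n₁, fun n hn => by rw [hsplit n, hYdiff n hn]⟩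
  have hσ₁θ : σ₁ θ = ch := by
    have := hvanish σ₁ (by rw [hσ₁g]; rw [Complex.norm_real, Real.norm_eq_abs]; rw [abs_of_pos hαpos]; linarith)
    rw [if_pos rfl] at this
    exact sub_eq_zero.1 this
  have hθR : (θ : ℝ) = ξ * (α ^ h - 1) := by
    have := hσ₁θ
    rw [hσ₁θ', hch_def] at this
    exact_mod_cast this
  have hθ0 : θ ≠ 0 := by
    intro hz
    rw [hz] at hθR
    rw [ZeroMemClass.coe_zero] at hθR
    linarith [hchpos]
  have hsmall : ∀ σ : (IntermediateField.adjoin ℚ ({α} : Set ℝ)) →ₐ[ℚ] ℂ,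
      σ ≠ σ₁ → ‖σ g‖ < 1 := by
    intro σ hne
    by_contra hge
    push_neg at hge
    have := hvanish σ hge
    rw [if_neg hne] at this
    have hθz : θ = 0 := by
      have hinj : Function.Injective σ := σ.toRingHom.injective
      apply hinj
      rw [this, map_zero]
    exact hθ0 hθz
  have hξmem : ξ ∈ IntermediateField.adjoin ℚ ({α} : Set ℝ) := by
    have hαh1 : (1:ℝ) < α ^ h := one_lt_pow₀ hα (by omega)
    have hgh : ((g ^ h - 1 : IntermediateField.adjoin ℚ ({α} : Set ℝ)) : ℝ) = α ^ h - 1 := by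
      push_cast
      rw [hgcoe]
    have hne : (g ^ h - 1 : IntermediateField.adjoin ℚ ({α} : Set ℝ)) ≠ 0 := by
      intro hz
      rw [hz] at hgh
      rw [ZeroMemClass.coe_zero] at hgh
      linarith
    set wξ : IntermediateField.adjoin ℚ ({α} : Set ℝ) := θ * (g ^ h - 1)⁻¹ with hwξ
    have hwcoe : (wξ : ℝ) = ξ := by
      rw [hwξ]
      have h2 : ((θ * (g ^ h - 1)⁻¹ : IntermediateField.adjoin ℚ ({α} : Set ℝ)) : ℝ)
          = (θ : ℝ) * (((g ^ h - 1 : IntermediateField.adjoin ℚ ({α} : Set ℝ)) : ℝ))⁻¹ := by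
        norm_cast
      rw [h2, hgh, hθR]
      exact mul_inv_cancel_right₀ (sub_ne_zero.2 hαh1.ne') ξ
    rw [← hwcoe]
    exact wξ.2
  have hconj : ∀ z : ℂ, aeval z (minpoly ℚ α) = 0 → z ≠ (α:ℂ) → ‖z‖ < 1 := by
    intro z hz hza
    have hzroot : z ∈ (minpoly ℚ α).aroots ℂ := by
      rw [mem_aroots]
      exact ⟨minpoly.ne_zero hint, hz⟩
    set σz := (IntermediateField.algHomAdjoinIntegralEquiv ℚ (K := ℂ) hint).symm ⟨z, hzroot⟩
      with hσz
    have hσg : σz g = z :=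
      IntermediateField.algHomAdjoinIntegralEquiv_symm_apply_gen ℚ hint ⟨z, hzroot⟩
    have hσne : σz ≠ σ₁ := by
      intro hcontra
      apply hza
      rw [← hσg, hcontra]
      exact hσ₁g
    rw [← hσg]
    exact hsmall σz hσne
  have hαint : IsIntegral ℤ α := by
    have hrank : Module.finrank ℚ (IntermediateField.adjoin ℚ ({α} : Set ℝ)) = d :=
      IntermediateField.adjoin.finrank hint
    have hcard : Fintype.card ((IntermediateField.adjoin ℚ ({α} : Set ℝ)) →ₐ[ℚ] ℂ) = d := by
      rw [AlgHom.card ℚ _ ℂ, hrank]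
    set eqv := Fintype.equivFinOfCardEq hcard with heqv
    set lam : Fin d → ℂ := fun i => (eqv.symm i) g with hlam
    have hlaminj : Function.Injective lam := by
      intro i j hij
      exact eqv.symm.injective (hginj hij)
    set Vm := Matrix.vandermonde lam with hVm
    have hdet : IsUnit Vm.det := by
      rw [hVm, Matrix.det_vandermonde, isUnit_iff_ne_zero]
      apply Finset.prod_ne_zero_iff.2
      intro i _
      apply Finset.prod_ne_zero_iff.2
      intro j hj
      have hne : lam j ≠ lam i := fun hcc => (ne_of_gt (Finset.mem_Ioi.1 hj)) (hlaminj hcc)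
      exact sub_ne_zero.2 hne
    set bb : Fin d → ℂ := fun i => if eqv.symm i = σ₁ then 1 else 0 with hbb
    set w : Fin d → ℂ := Matrix.mulVec Vm⁻¹ bb with hwdef
    have hVw : Matrix.mulVec Vm w = bb := by
      rw [hwdef, Matrix.mulVec_mulVec, Matrix.mul_nonsing_inv _ hdet, Matrix.one_mulVec]
    have hwspec : ∀ σ : (IntermediateField.adjoin ℚ ({α} : Set ℝ)) →ₐ[ℚ] ℂ,
        ∑ j : Fin d, (σ g) ^ (j:ℕ) * w j = (if σ = σ₁ then 1 else 0) := by
      intro σ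
      have h1 := congrFun hVw (eqv σ)
      simp only [Matrix.mulVec, dotProduct, hVm, Matrix.vandermonde, hbb,
        Matrix.of_apply, hlam, Equiv.symm_apply_apply] at h1
      exact h1
    have hFY : ∀ n, n₁ ≤ n → ((Y n : ℝ) : ℂ)
        = ∑ σ : (IntermediateField.adjoin ℚ ({α} : Set ℝ)) →ₐ[ℚ] ℂ, σ θ * (σ g)^n := by
      intro n hn
      rw [htraceC n, hYt n hn]
      norm_cast
    have hkey : ∀ n : ℕ, ch * ((α:ℝ):ℂ)^(n₁ + n)
        = ∑ j : Fin d, ((Y (n₁ + n + (j:ℕ)) : ℝ) : ℂ) * w j := by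
      intro n
      have h1 : ∀ j : Fin d, ((Y (n₁ + n + (j:ℕ)) : ℝ) : ℂ) * w j
          = ∑ σ : (IntermediateField.adjoin ℚ ({α} : Set ℝ)) →ₐ[ℚ] ℂ,
            (σ θ * (σ g)^(n₁+n)) * ((σ g)^(j:ℕ) * w j) := by
        intro j
        rw [hFY _ (by omega), Finset.sum_mul]
        apply Finset.sum_congr rfl
        intro σ _
        rw [pow_add, pow_add]
        ring
      rw [Finset.sum_congr rfl fun j _ => h1 j, Finset.sum_comm]
      have h2 : ∀ σ : (IntermediateField.adjoin ℚ ({α} : Set ℝ)) →ₐ[ℚ] ℂ,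
          ∑ j : Fin d, (σ θ * (σ g)^(n₁+n)) * ((σ g)^(j:ℕ) * w j)
          = σ θ * (σ g)^(n₁+n) * (if σ = σ₁ then 1 else 0) := by
        intro σ
        rw [← Finset.mul_sum, hwspec σ]
      rw [Finset.sum_congr rfl fun σ _ => h2 σ]
      have h3 : ∑ σ : (IntermediateField.adjoin ℚ ({α} : Set ℝ)) →ₐ[ℚ] ℂ,
          σ θ * (σ g)^(n₁+n) * (if σ = σ₁ then 1 else 0)
          = σ₁ θ * (σ₁ g)^(n₁+n) := by
        rw [Finset.sum_eq_single σ₁]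
        · rw [if_pos rfl, mul_one]
        · intro σ _ hσ
          rw [if_neg hσ, mul_zero]
        · intro hmem
          exact absurd (Finset.mem_univ σ₁) hmem
      rw [h3, hσ₁θ, hσ₁g]
    obtain ⟨Δ, hΔpos, hΔint⟩ : ∃ Δ : ℕ, 0 < Δ ∧ ∀ n ≥ n₁, ∃ z : ℤ, (z:ℝ) = (Δ:ℝ) * Y n := by
      have hDfin : (Set.image2 (fun x y' : ℝ => x - y') L L).Finite := hLfin.image2 _ hLfin
      set den : ℝ → ℕ := fun x => if hx : ∃ r : ℚ, (r:ℝ) = x then hx.choose.den else 1 with hden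
      refine ⟨∏ x ∈ hDfin.toFinset, den x, Finset.prod_pos fun x _ => ?_, ?_⟩
      · rw [hden]
        dsimp only
        split
        · exact Rat.den_pos _
        · exact one_pos
      · intro n hn
        have hδD : c (n+h) - c n ∈ Set.image2 (fun x y' : ℝ => x - y') L L :=
          ⟨c (n+h), hcL _, c n, hcL _, rfl⟩
        have hYn : Y n = ((a (n+h) : ℝ) - (a n : ℝ)) + (c (n+h) - c n) := by
          have h7 : Y n = y (n+h) - y n := rfl
          rw [h7, hyac, hyac]
          ring
        have hδQ : ∃ r : ℚ, (r:ℝ) = c (n+h) - c n := by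
          refine ⟨t n - ((a (n+h) - a n : ℤ) : ℚ), ?_⟩
          push_cast
          have h8 : ((t n : ℚ) : ℝ) = Y n := (hYt n hn).symm
          rw [h8, hYn]
          ring
        have hdc : den (c (n+h) - c n) = hδQ.choose.den := by
          rw [hden]
          dsimp only
          rw [dif_pos hδQ]
        have hdvd : (hδQ.choose).den ∣ ∏ x ∈ hDfin.toFinset, den x := by
          rw [← hdc]
          exact Finset.dvd_prod_of_mem _ (hDfin.mem_toFinset.2 hδD)
        obtain ⟨k, hk⟩ := hdvd
        refine ⟨(a (n+h) - a n) * (∏ x ∈ hDfin.toFinset, den x : ℕ) + k * hδQ.choose.num, ?_⟩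
        have hr := hδQ.choose_spec
        have hnum : ((hδQ.choose.num : ℤ):ℝ) = ((hδQ.choose.den : ℕ) : ℝ) * (c (n+h) - c n) := by
          have h5 := Rat.mul_den_eq_num hδQ.choose
          have h6 : ((hδQ.choose : ℚ) : ℝ) * ((hδQ.choose.den : ℕ) : ℝ)
              = ((hδQ.choose.num : ℤ) : ℝ) := by
            exact_mod_cast congrArg (fun r : ℚ => (r:ℝ)) h5
          rw [hr] at h6
          linarith [h6]
        have hΔcast : ((∏ x ∈ hDfin.toFinset, den x : ℕ) : ℝ)
            = ((hδQ.choose.den : ℕ) : ℝ) * (k : ℝ) := by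
          exact_mod_cast congrArg (fun z : ℕ => (z : ℝ)) hk
        rw [Int.cast_add, Int.cast_mul, Int.cast_mul, Int.cast_natCast, Int.cast_sub]
        rw [hYn, hΔcast]
        push_cast
        linear_combination (k:ℝ) * hnum
    set β : ℂ := (Δ:ℂ) * ch * ((α:ℝ):ℂ)^(n₁) with hβ
    have hβ0 : β ≠ 0 := by
      rw [hβ]
      have hΔC : (Δ:ℂ) ≠ 0 := Nat.cast_ne_zero.2 hΔpos.ne'
      have hαC : ((α:ℝ):ℂ) ≠ 0 := Complex.ofReal_ne_zero.2 hα0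
      exact mul_ne_zero (mul_ne_zero hΔC hch0) (pow_ne_zero _ hαC)
    set gens : ℕ → ℂ := fun n => β * ((α:ℝ):ℂ)^n with hgens
    set Fsub := Submodule.span ℤ (Set.range w) with hFsub
    set NN := Submodule.span ℤ (Set.range gens) with hNN
    have hFfg : Fsub.FG := Submodule.fg_span (Set.finite_range w)
    have hgen_mem : ∀ n, gens n ∈ Fsub := by
      intro n
      have h1 := hkey n
      have h2 : gens n = ∑ j : Fin d, ((Δ:ℂ) * ((Y (n₁ + n + (j:ℕ)) : ℝ):ℂ)) * w j := by
        rw [hgens, hβ]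
        calc (Δ:ℂ) * ch * ((α:ℝ):ℂ)^(n₁) * ((α:ℝ):ℂ)^n
            = (Δ:ℂ) * (ch * ((α:ℝ):ℂ)^(n₁+n)) := by
              rw [pow_add]
              ring
          _ = (Δ:ℂ) * ∑ j : Fin d, ((Y (n₁ + n + (j:ℕ)) : ℝ):ℂ) * w j := by rw [h1]
          _ = ∑ j : Fin d, ((Δ:ℂ) * ((Y (n₁ + n + (j:ℕ)) : ℝ):ℂ)) * w j := by
              rw [Finset.mul_sum]
              apply Finset.sum_congr rfl
              intro j _
              ring
      rw [h2]
      apply Submodule.sum_mem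
      intro j _
      obtain ⟨z, hz⟩ := hΔint (n₁ + n + (j:ℕ)) (by omega)
      have h3 : ((Δ:ℂ) * ((Y (n₁ + n + (j:ℕ)) : ℝ):ℂ)) = ((z:ℤ):ℂ) := by
        have h4 : ((z:ℝ):ℂ) = (((Δ:ℝ) * Y (n₁ + n + (j:ℕ)) : ℝ) : ℂ) := by
          rw [hz]
        push_cast at h4
        exact_mod_cast h4.symm
      rw [h3, ← zsmul_eq_mul]
      exact Submodule.smul_mem _ _ (Submodule.subset_span (Set.mem_range_self j))
    have hNle : NN ≤ Fsub := Submodule.span_le.2 (by rintro x ⟨n, rfl⟩; exact hgen_mem n)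
    have hNfg : NN.FG := by
      haveI := isNoetherian_of_fg_of_noetherian Fsub hFfg
      have h5 : Submodule.map Fsub.subtype (Submodule.comap Fsub.subtype NN) = NN := by
        rw [Submodule.map_comap_subtype]
        exact inf_eq_right.2 hNle
      rw [← h5]
      exact (IsNoetherian.noetherian _).map _
    have hNbot : NN ≠ ⊥ := by
      intro hbot
      have h6 : gens 0 ∈ NN := Submodule.subset_span (Set.mem_range_self 0)
      rw [hbot, Submodule.mem_bot] at h6
      apply hβ0
      have h7 : gens 0 = β := by
        simp only [hgens]
        rw [pow_zero, mul_one]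
      rw [← h7, h6]
    have hsmul : ∀ x ∈ NN, ((α:ℝ):ℂ) • x ∈ NN := by
      intro x hx
      induction hx using Submodule.span_induction with
      | mem x hx =>
        obtain ⟨n, rfl⟩ := hx
        have h8 : ((α:ℝ):ℂ) • gens n = gens (n+1) := by
          simp only [hgens]
          rw [smul_eq_mul, pow_succ]
          ring
        rw [h8]
        exact Submodule.subset_span (Set.mem_range_self _)
      | zero =>
        rw [smul_zero]
        exact Submodule.zero_mem _
      | add x y _ _ hx hy =>
        rw [smul_add]
        exact Submodule.add_mem _ hx hy
      | smul r x _ hx =>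
        rw [smul_comm]
        exact Submodule.smul_mem _ _ hx
    have hCint : IsIntegral ℤ ((α:ℝ):ℂ) :=
      isIntegral_of_smul_mem_submodule NN hNbot hNfg _ hsmul
    obtain ⟨p, hpm, hproot⟩ := hCint
    refine ⟨p, hpm, ?_⟩
    have h8 : Complex.ofRealHom (Polynomial.eval₂ (algebraMap ℤ ℝ) α p) = 0 := by
      rw [Polynomial.hom_eval₂]
      rw [show (Complex.ofRealHom.comp (algebraMap ℤ ℝ)) = algebraMap ℤ ℂ from
        RingHom.ext_int _ _]
      exact hproot
    exact (map_eq_zero_iff Complex.ofRealHom Complex.ofReal_injective).1 h8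
  exact ⟨⟨hα, hαint, hconj⟩, hξmem⟩
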